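/- arXiv:2106.00878 — 2 statements merged into one kernel-verified Lean document; each statement's English description precedes it below -/
import Mathlib

section
/- Let G be a finite group, H ⊴ G with G/H abelian, N ≤ G a subgroup, N_H = N ∩ H, and S ≤ N_H an abelian subgroup normal in N on which a character θ is fixed by N. Let σ be a finite-dimensional semisimple representation of the semidirect-product-style subgroup H ⋊ N ≤ G ⋊ N (where N acts on G by conjugation) such that for every s ∈ S, the element s^{-1} ⋊ s acts on σ by the scalar θ(s). Define σ' : H × N_H → GL(σ) by σ'(h,n) = σ(h n^{-1} ⋊ n). If End_H(σ) = ⊕_{n ∈ N_H/S} ℂ·σ(n^{-1} ⋊ n), then for every 1-dimensional character θ̃ of N_H extending θ, there is exactly one irreducible constituent τ of σ|_H such that τ ⊠ θ̃ occurs in σ', and it occurs with multiplicity one. -/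
noncomputable section

section RepHelpers

variable {K : Type*} [Group K] {V : Type*} [AddCommGroup V] [Module ℂ V]
variable {W : Type*} [AddCommGroup W] [Module ℂ W]

def RepInvariant (ρ : Representation ℂ K V) (p : Submodule ℂ V) : Prop :=
  ∀ (g : K), ∀ v ∈ p, ρ g v ∈ p

def RepIrreducible (ρ : Representation ℂ K V) : Prop :=
  Nontrivial V ∧ ∀ p : Submodule ℂ V, RepInvariant ρ p → p = ⊥ ∨ p = ⊤

def equivariantMaps (ρ : Representation ℂ K V) (σ : Representation ℂ K W) :
    Submodule ℂ (V →ₗ[ℂ] W) where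
  carrier := {f | ∀ (g : K) (v : V), f (ρ g v) = σ g (f v)}
  add_mem' := fun hf hg => by
    intro k v
    simp only [LinearMap.add_apply]
    rw [hf k v, hg k v, map_add]
  zero_mem' := by intro k v; simp
  smul_mem' := fun c f hf => by
    intro k v
    simp only [LinearMap.smul_apply]
    rw [hf k v, map_smul]

/-- The multiplicity of `ρ` in the semisimple representation `σ`. -/
def repMult (ρ : Representation ℂ K V) (σ : Representation ℂ K W) : ℕ :=
  Module.finrank ℂ (equivariantMaps ρ σ)

def RepIso (ρ : Representation ℂ K V) (σ : Representation ℂ K W) : Prop :=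
  ∃ e : V ≃ₗ[ℂ] W, ∀ (g : K) (v : V), e (ρ g v) = σ g (e v)

def subRep (ρ : Representation ℂ K V) (p : Submodule ℂ V) (hp : RepInvariant ρ p) :
    Representation ℂ K ↥p where
  toFun g := (ρ g).restrict (hp g)
  map_one' := by ext v; simp
  map_mul' := by intro g h; ext v; simp

end RepHelpers

section SD

variable {G : Type*} [Group G]

/-- The conjugation action of a subgroup `N ≤ G` on `G`. -/
def conjAct (N : Subgroup G) : ↥N →* MulAut G :=
  (MulAut.conj (G := G)).comp N.subtype

/-- The semidirect product `G ⋊ N` for the conjugation action of `N ≤ G` on `G`. -/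
abbrev GsdN (N : Subgroup G) := SemidirectProduct G ↥N (conjAct N)

/-- The subgroup `H ⋊ N` of `G ⋊ N`, for `H ⊴ G`. -/
def HsdN (H : Subgroup G) (hH : H.Normal) (N : Subgroup G) : Subgroup (GsdN N) where
  carrier := {x | x.left ∈ H}
  one_mem' := by simp [Set.mem_setOf_eq]
  mul_mem' := by
    intro a b ha hb
    simp only [Set.mem_setOf_eq, SemidirectProduct.mul_left] at *
    exact H.mul_mem ha (hH.conj_mem _ hb _)
  inv_mem' := by
    intro a ha
    simp only [Set.mem_setOf_eq, SemidirectProduct.inv_left] at *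
    exact hH.conj_mem _ (H.inv_mem ha) _

/-- The inclusion `H → H ⋊ N`, `h ↦ h ⋊ 1`. -/
def jH (H : Subgroup G) (hH : H.Normal) (N : Subgroup G) : ↥H →* ↥(HsdN H hH N) where
  toFun h := ⟨⟨(h : G), 1⟩, h.2⟩
  map_one' := by ext <;> rfl
  map_mul' := by
    intro a b
    refine Subtype.ext (SemidirectProduct.ext ?_ ?_)
    · change ((a * b : ↥H) : G) = (a : G) * (conjAct N 1) (b : G)
      simp [conjAct]
    · change (1 : ↥N) = 1 * 1
      simp

/-- The homomorphism `H × N_H → H ⋊ N`, `(h, n) ↦ h n⁻¹ ⋊ n`. -/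
def jHNH (H : Subgroup G) (hH : H.Normal) (N : Subgroup G) :
    ↥H × ↥(N ⊓ H) →* ↥(HsdN H hH N) where
  toFun p := ⟨⟨(p.1 : G) * ((p.2 : G))⁻¹, ⟨(p.2 : G), p.2.2.1⟩⟩,
    H.mul_mem p.1.2 (H.inv_mem p.2.2.2)⟩
  map_one' := by ext <;> simp [HsdN, conjAct]
  map_mul' := by
    intro a b
    refine Subtype.ext (SemidirectProduct.ext ?_ ?_)
    · change ((a * b).1 : G) * (((a * b).2 : G))⁻¹ = ((a.1 : G) * ((a.2 : G))⁻¹) *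
        (conjAct N ⟨(a.2 : G), a.2.2.1⟩) ((b.1 : G) * ((b.2 : G))⁻¹)
      simp [conjAct]
      group
    · change (⟨((a * b).2 : G), (a * b).2.2.1⟩ : ↥N) = ⟨(a.2 : G), a.2.2.1⟩ * ⟨(b.2 : G), b.2.2.1⟩
      ext
      simp

/-- The element `n⁻¹ ⋊ n` of `H ⋊ N` for `n ∈ N_H = N ∩ H`. -/
def xdiag (H : Subgroup G) (hH : H.Normal) (N : Subgroup G) (n : ↥(N ⊓ H)) :
    ↥(HsdN H hH N) :=
  ⟨⟨((n : G))⁻¹, ⟨(n : G), n.2.1⟩⟩, H.inv_mem n.2.2⟩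

end SD

section Box

variable {G : Type*} [Group G] {K : Type*} [Group K]
variable {W : Type*} [AddCommGroup W] [Module ℂ W]

/-- The external tensor product `τ ⊠ θ̃` of a representation `τ` of `A` with a
1-dimensional character `θ̃` of `B`, realized on the space of `τ`. -/
def boxRep {A B : Type*} [Group A] [Group B] (τ : Representation ℂ A W) (χ : B →* ℂˣ) :
    Representation ℂ (A × B) W where
  toFun p := (χ p.2 : ℂ) • τ p.1
  map_one' := by simp
  map_mul' := by
    intro a b
    ext v
    simp [smul_smul, mul_comm]

end Box

section SDLemmas
variable {G : Type*} [Group G] (H : Subgroup G) (hH : H.Normal) (N : Subgroup G)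

lemma xdiag_mul (n m : ↥(N ⊓ H)) :
    xdiag H hH N (n * m) = xdiag H hH N n * xdiag H hH N m := by
  refine Subtype.ext (SemidirectProduct.ext ?_ ?_)
  · change ((n * m : ↥(N ⊓ H)) : G)⁻¹ = (n : G)⁻¹ * (conjAct N ⟨(n : G), n.2.1⟩) ((m : G)⁻¹)
    simp [conjAct]
    group
  · change (⟨((n * m : ↥(N ⊓ H)) : G), (n * m).2.1⟩ : ↥N) = ⟨(n : G), n.2.1⟩ * ⟨(m : G), m.2.1⟩
    ext
    simp

lemma xdiag_comm_jH (n : ↥(N ⊓ H)) (h : ↥H) :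
    xdiag H hH N n * jH H hH N h = jH H hH N h * xdiag H hH N n := by
  refine Subtype.ext (SemidirectProduct.ext ?_ ?_)
  · change (n : G)⁻¹ * (conjAct N ⟨(n : G), n.2.1⟩) (h : G) = (h : G) * (conjAct N 1) ((n : G)⁻¹)
    simp [conjAct]
    group
  · change (⟨(n : G), n.2.1⟩ : ↥N) * 1 = 1 * ⟨(n : G), n.2.1⟩
    simp

lemma jHNH_eq (h : ↥H) (n : ↥(N ⊓ H)) :
    jHNH H hH N (h, n) = jH H hH N h * xdiag H hH N n := by
  refine Subtype.ext (SemidirectProduct.ext ?_ ?_)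
  · change (h : G) * (n : G)⁻¹ = (h : G) * (conjAct N 1) ((n : G)⁻¹)
    simp [conjAct]
  · change (⟨(n : G), n.2.1⟩ : ↥N) = 1 * ⟨(n : G), n.2.1⟩
    simp

end SDLemmas

section Helpers

variable {K : Type*} [Group K] {V : Type*} [AddCommGroup V] [Module ℂ V]

/-- An equivariant projection onto an invariant submodule with invariant complement. -/
lemma proj_equivariant (ρ : Representation ℂ K V) {p q : Submodule ℂ V}
    (hp : RepInvariant ρ p) (hq : RepInvariant ρ q) (hc : IsCompl p q) :
    ∀ (g : K) (v : V),
      (p.subtype ∘ₗ p.projectionOnto q hc) (ρ g v)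
        = ρ g ((p.subtype ∘ₗ p.projectionOnto q hc) v) := by
  intro g v
  obtain ⟨y, z, hy, hz, rfl⟩ := Submodule.codisjoint_iff_exists_add_eq.mp hc.codisjoint v
  have h1 : ∀ m (hm : m ∈ p), (p.subtype ∘ₗ p.projectionOnto q hc) m = m := by
    intro m hm
    simp [Submodule.projectionOnto_apply_left hc ⟨m, hm⟩]
  have h2 : ∀ m (hm : m ∈ q), (p.subtype ∘ₗ p.projectionOnto q hc) m = 0 := by
    intro m hm
    simp [Submodule.projectionOnto_apply_right hc ⟨m, hm⟩]
  simp only [map_add, h1 _ (hp g y hy), h2 _ (hq g z hz), h1 y hy, h2 z hz, add_zero]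

/-- If `e` is a nonzero equivariant idempotent such that every equivariant endomorphism
`a` satisfies `a ∘ e ∈ ℂ • e`, and the representation is semisimple, then `range e` is
an irreducible subrepresentation. -/
lemma range_idem_irreducible (ρ : Representation ℂ K V) (e : V →ₗ[ℂ] V)
    (hcomm : ∀ (g : K) (v : V), e (ρ g v) = ρ g (e v))
    (hidem : ∀ v, e (e v) = e v) (hne : e ≠ 0)
    (hss : ∀ p : Submodule ℂ V, RepInvariant ρ p →
      ∃ q : Submodule ℂ V, RepInvariant ρ q ∧ IsCompl p q)
    (hAe : ∀ a : V →ₗ[ℂ] V, (∀ (g : K) (v : V), a (ρ g v) = ρ g (a v)) →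
      ∃ c : ℂ, a ∘ₗ e = c • e)
    (hinv : RepInvariant ρ (LinearMap.range e)) :
    RepIrreducible (subRep ρ (LinearMap.range e) hinv) := by
  have hfix : ∀ v ∈ LinearMap.range e, e v = v := by
    rintro _ ⟨w, rfl⟩; exact hidem w
  constructor
  · rw [Submodule.nontrivial_iff_ne_bot, ne_eq, LinearMap.range_eq_bot]
    exact hne
  intro p hp
  by_cases hbot : p = ⊥
  · exact Or.inl hbot
  right
  obtain ⟨u, umem, hune⟩ := Submodule.exists_mem_ne_zero_of_ne_bot hbot
  set uv : V := (u : V) with huv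
  have huvne : uv ≠ 0 := fun h => hune (Subtype.ext h)
  have huvr : uv ∈ LinearMap.range e := u.2
  set M : Submodule ℂ V := Submodule.span ℂ (Set.range fun g : K => ρ g uv) with hM
  have hgen : ∀ g : K, ρ g uv ∈ M := fun g => Submodule.subset_span ⟨g, rfl⟩
  have huvM : uv ∈ M := by
    have := hgen 1
    simpa using this
  have Minv : RepInvariant ρ M := by
    intro g v hv
    induction hv using Submodule.span_induction with
    | mem x h =>
        obtain ⟨k, rfl⟩ := h
        have : ρ g (ρ k uv) = ρ (g * k) uv := by rw [map_mul]; rfl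
        rw [this]; exact hgen _
    | zero => simp
    | add x y hx hy ihx ihy => rw [map_add]; exact M.add_mem ihx ihy
    | smul a x hx ihx => rw [map_smul]; exact M.smul_mem a ihx
  obtain ⟨q, hq, hc⟩ := hss M Minv
  set π : V →ₗ[ℂ] V := M.subtype ∘ₗ M.projectionOnto q hc with hπ
  have πe : ∀ (g : K) (v : V), π (ρ g v) = ρ g (π v) := proj_equivariant ρ Minv hq hc
  have πM : ∀ v, π v ∈ M := fun v => (M.projectionOnto q hc v).2
  have πid : ∀ v ∈ M, π v = v := by
    intro v hv
    simp [hπ, Submodule.projectionOnto_apply_of_mem_left hc hv]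
  obtain ⟨c, hce⟩ := hAe (e ∘ₗ π) (by
    intro g v
    simp only [LinearMap.comp_apply, πe, hcomm])
  have hcev : ∀ v, e (π (e v)) = c • e v := fun v => congrArg (fun f => f v) hce
  have hc1 : c • uv = uv := by
    have := hcev uv
    rw [hfix uv huvr, πid uv huvM, hfix uv huvr] at this
    exact this.symm
  have hcne : c ≠ 0 := by
    intro h; rw [h, zero_smul] at hc1; exact huvne hc1.symm
  have eM : ∀ m ∈ M, e m ∈ M := by
    intro m hm
    induction hm using Submodule.span_induction with
    | mem x h =>
        obtain ⟨k, rfl⟩ := h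
        rw [hcomm, hfix uv huvr]; exact hgen _
    | zero => simp
    | add x y hx hy ihx ihy => rw [map_add]; exact M.add_mem ihx ihy
    | smul a x hx ihx => rw [map_smul]; exact M.smul_mem a ihx
  have hrle : LinearMap.range e ≤ M := by
    rintro _ ⟨w, rfl⟩
    have h1 : e (π (e w)) ∈ M := eM _ (πM (e w))
    rw [hcev w] at h1
    have := M.smul_mem c⁻¹ h1
    rwa [smul_smul, inv_mul_cancel₀ hcne, one_smul] at this
  have hMle : M ≤ Submodule.map (LinearMap.range e).subtype p := by
    rw [hM, Submodule.span_le]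
    rintro _ ⟨g, rfl⟩
    exact ⟨subRep ρ (LinearMap.range e) hinv g u, hp g u umem, rfl⟩
  ext x
  simp only [Submodule.mem_top, iff_true]
  have : (x : V) ∈ Submodule.map (LinearMap.range e).subtype p := hMle (hrle x.2)
  obtain ⟨y, hy, hyx⟩ := this
  rwa [show y = x from Subtype.ext hyx] at hy


/-- Maschke: over `ℂ`, every invariant submodule of a representation of a finite group
has an invariant complement. -/
lemma maschke_rep [Finite K] (ρ : Representation ℂ K V) (p : Submodule ℂ V)
    (hp : RepInvariant ρ p) :
    ∃ q : Submodule ℂ V, RepInvariant ρ q ∧ IsCompl p q := by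
  classical
  letI : Fintype K := Fintype.ofFinite K
  obtain ⟨q₀, hq₀⟩ := Submodule.exists_isCompl p
  set π₀ : V →ₗ[ℂ] V := p.subtype ∘ₗ p.projectionOnto q₀ hq₀ with hπ₀
  have hπ₀p : ∀ v, π₀ v ∈ p := fun v => (p.projectionOnto q₀ hq₀ v).2
  have hπ₀id : ∀ v ∈ p, π₀ v = v := by
    intro v hv
    simp [hπ₀, Submodule.projectionOnto_apply_of_mem_left hq₀ hv]
  have hcard : ((Fintype.card K : ℂ)) ≠ 0 := by
    exact_mod_cast Nat.cast_ne_zero.mpr Fintype.card_ne_zero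
  set π : V →ₗ[ℂ] V :=
    ((Fintype.card K : ℂ))⁻¹ • ∑ g : K, ρ g ∘ₗ π₀ ∘ₗ ρ g⁻¹ with hπ
  have hπv : ∀ v : V, π v = ((Fintype.card K : ℂ))⁻¹ • ∑ g : K, ρ g (π₀ (ρ g⁻¹ v)) := by
    intro v; rw [hπ]; simp [LinearMap.sum_apply]
  have hρρ : ∀ (g h : K) (v : V), ρ g (ρ h v) = ρ (g * h) v := by
    intro g h v; rw [map_mul]; rfl
  have hρinv : ∀ (g : K) (v : V), ρ g (ρ g⁻¹ v) = v := by
    intro g v; rw [hρρ, mul_inv_cancel, map_one]; rfl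
  have hπp : ∀ v, π v ∈ p := by
    intro v
    rw [hπv]
    refine p.smul_mem _ (Submodule.sum_mem p (fun g _ => ?_))
    exact hp g _ (hπ₀p _)
  have hπid : ∀ v ∈ p, π v = v := by
    intro v hv
    rw [hπv]
    have : ∀ g : K, ρ g (π₀ (ρ g⁻¹ v)) = v := by
      intro g
      rw [hπ₀id _ (hp g⁻¹ v hv), hρinv]
    rw [Finset.sum_congr rfl (fun g _ => this g), Finset.sum_const, Finset.card_univ,
      ← Nat.cast_smul_eq_nsmul ℂ, smul_smul, inv_mul_cancel₀ hcard, one_smul]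
  have hπe : ∀ (g : K) (v : V), π (ρ g v) = ρ g (π v) := by
    intro g v
    rw [hπv, hπv, map_smul, map_sum]
    congr 1
    refine Fintype.sum_equiv (Equiv.mulLeft g⁻¹) _ _ (fun k => ?_)
    simp only [Equiv.coe_mulLeft]
    conv_rhs => rw [hρρ g (g⁻¹ * k), mul_inv_cancel_left, mul_inv_rev, inv_inv,
      ← hρρ k⁻¹ g]
  refine ⟨LinearMap.ker π, ?_, ?_, ?_⟩
  · intro g v hv
    rw [LinearMap.mem_ker] at hv ⊢
    rw [hπe, hv, map_zero]
  · rw [Submodule.disjoint_def]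
    intro v hvp hvk
    rw [LinearMap.mem_ker] at hvk
    rw [← hπid v hvp, hvk]
  · rw [codisjoint_iff, Submodule.eq_top_iff']
    intro v
    refine Submodule.mem_sup.mpr ⟨π v, hπp v, v - π v, ?_, by abel⟩
    rw [LinearMap.mem_ker, map_sub, hπid _ (hπp v), sub_self]

end Helpers

/-- with `G` finite, `H ⊴ G`, `G/H` abelian, `N ≤ G`, `N_H = N ∩ H`,
`S ≤ N_H` abelian normal in `N` with `N`-invariant character `θ` (such that every
irreducible representation of `N_H` that is `θ`-isotypic on `S` is 1-dimensional);
`σ` a semisimple representation of `H ⋊ N` on which `s⁻¹ ⋊ s` acts by `θ(s)`, and with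
`End_H(σ) = ⊕_{n ∈ N_H/S} ℂ·σ(n⁻¹ ⋊ n)`; set `σ'(h, n) = σ(h n⁻¹ ⋊ n)`.  Then for every
1-dimensional character `θ̃` of `N_H` extending `θ` there is exactly one irreducible
constituent `τ` of `σ|_H` such that `τ ⊠ θ̃` occurs in `σ'`, and it occurs with
multiplicity one. -/
theorem stmt4 {G : Type*} [Group G] [Finite G]
    (H N S : Subgroup G) (hH : H.Normal)
    (habGH : ∀ a b : G, a * b * a⁻¹ * b⁻¹ ∈ H)
    (hSNH : S ≤ N ⊓ H)
    (habS : ∀ a b : ↥S, a * b = b * a)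
    (hSnormN : ∀ (n : ↥N), ∀ s ∈ S, (n : G) * s * ((n : G))⁻¹ ∈ S)
    (θ : ↥S →* ℂˣ)
    (hinv : ∀ (n : ↥N) (s : ↥S),
      θ ⟨(n : G) * (s : G) * ((n : G))⁻¹, hSnormN n s.1 s.2⟩ = θ s)
    (hdim : ∀ (U : Type) [AddCommGroup U] [Module ℂ U] [FiniteDimensional ℂ U]
      (ρ : Representation ℂ ↥(N ⊓ H) U), RepIrreducible ρ →
      (∀ s : ↥S, ρ ⟨(s : G), hSNH s.2⟩ = (θ s : ℂ) • LinearMap.id) →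
      Module.finrank ℂ U = 1)
    (V : Type) [AddCommGroup V] [Module ℂ V] [FiniteDimensional ℂ V]
    (σ : Representation ℂ ↥(HsdN H hH N) V)
    (hss : ∀ p : Submodule ℂ V, RepInvariant σ p →
      ∃ q : Submodule ℂ V, RepInvariant σ q ∧ IsCompl p q)
    (hθσ : ∀ s : ↥S,
      σ (xdiag H hH N ⟨(s : G), hSNH s.2⟩) = (θ s : ℂ) • LinearMap.id)
    (h1span : equivariantMaps (σ.comp (jH H hH N)) (σ.comp (jH H hH N)) =
      Submodule.span ℂ (Set.range fun n : ↥(N ⊓ H) => σ (xdiag H hH N n)))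
    (h1indep : LinearIndependent ℂ
      (fun c : (↥(N ⊓ H) ⧸ S.subgroupOf (N ⊓ H)) => σ (xdiag H hH N (Quotient.out c)))) :
    ∀ θt : ↥(N ⊓ H) →* ℂˣ, (∀ s : ↥S, θt ⟨(s : G), hSNH s.2⟩ = θ s) →
      ∃ (Wp : Submodule ℂ V) (hWp : RepInvariant (σ.comp (jH H hH N)) Wp),
        RepIrreducible (subRep (σ.comp (jH H hH N)) Wp hWp) ∧
        repMult (boxRep (subRep (σ.comp (jH H hH N)) Wp hWp) θt)
          (σ.comp (jHNH H hH N)) = 1 ∧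
        ∀ (Wq : Submodule ℂ V) (hWq : RepInvariant (σ.comp (jH H hH N)) Wq),
          RepIrreducible (subRep (σ.comp (jH H hH N)) Wq hWq) →
          repMult (boxRep (subRep (σ.comp (jH H hH N)) Wq hWq) θt)
            (σ.comp (jHNH H hH N)) ≠ 0 →
          RepIso (subRep (σ.comp (jH H hH N)) Wp hWp)
            (subRep (σ.comp (jH H hH N)) Wq hWq) := by
  intro θt hext
  classical
  set ρ : Representation ℂ ↥H V := σ.comp (jH H hH N) with hρ
  set T : ↥(N ⊓ H) → (V →ₗ[ℂ] V) := fun n => σ (xdiag H hH N n) with hTdef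
  set S' : Subgroup ↥(N ⊓ H) := S.subgroupOf (N ⊓ H) with hS'
  letI : Fintype (↥(N ⊓ H) ⧸ S') := Fintype.ofFinite _
  haveI : Nonempty (↥(N ⊓ H) ⧸ S') := ⟨QuotientGroup.mk 1⟩
  -- basic facts about T
  have hTmul : ∀ n m : ↥(N ⊓ H), T (n * m) = T n * T m := by
    intro n m; rw [hTdef]; simp only; rw [xdiag_mul, map_mul]
  have hT1 : T 1 = 1 := by
    have : xdiag H hH N 1 = 1 := by ext <;> simp [xdiag, HsdN, conjAct]
    rw [hTdef]; simp only; rw [this, map_one]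
  have hTρ : ∀ (n : ↥(N ⊓ H)) (g : ↥H) (v : V), T n (ρ g v) = ρ g (T n v) := by
    intro n g v
    have : σ (xdiag H hH N n * jH H hH N g) = σ (jH H hH N g * xdiag H hH N n) := by
      rw [xdiag_comm_jH]
    rw [map_mul, map_mul] at this
    have := congrArg (fun f => f v) this
    simpa [hρ, hTdef, MonoidHom.comp_apply] using this
  have hTS' : ∀ s : ↥S',
      T (s : ↥(N ⊓ H)) = ((θ ⟨((s : ↥(N ⊓ H)) : G), Subgroup.mem_subgroupOf.mp s.2⟩ : ℂ)) •
        LinearMap.id := by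
    intro s
    have h2 : (⟨((⟨((s : ↥(N ⊓ H)) : G), Subgroup.mem_subgroupOf.mp s.2⟩ : ↥S) : G),
        hSNH (Subgroup.mem_subgroupOf.mp s.2)⟩ : ↥(N ⊓ H)) = (s : ↥(N ⊓ H)) :=
      Subtype.ext rfl
    have := hθσ ⟨((s : ↥(N ⊓ H)) : G), Subgroup.mem_subgroupOf.mp s.2⟩
    rw [h2] at this
    rw [hTdef]
    exact this
  have hθtS' : ∀ s : ↥S',
      θt (s : ↥(N ⊓ H)) = θ ⟨((s : ↥(N ⊓ H)) : G), Subgroup.mem_subgroupOf.mp s.2⟩ := by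
    intro s
    have h2 : (⟨((⟨((s : ↥(N ⊓ H)) : G), Subgroup.mem_subgroupOf.mp s.2⟩ : ↥S) : G),
        hSNH (Subgroup.mem_subgroupOf.mp s.2)⟩ : ↥(N ⊓ H)) = (s : ↥(N ⊓ H)) :=
      Subtype.ext rfl
    have := hext ⟨((s : ↥(N ⊓ H)) : G), Subgroup.mem_subgroupOf.mp s.2⟩
    rwa [h2] at this
  -- the idempotent e
  set Q := ↥(N ⊓ H) ⧸ S' with hQ
  set κ : Q → ℂ := fun c => ((θt (Quotient.out c) : ℂ))⁻¹ with hκ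
  have hκne : ∀ c, κ c ≠ 0 := fun c => inv_ne_zero (Units.ne_zero _)
  have hκmul : ∀ c, κ c * ((θt (Quotient.out c) : ℂ)) = 1 :=
    fun c => inv_mul_cancel₀ (Units.ne_zero _)
  set e : V →ₗ[ℂ] V :=
    ((Fintype.card Q : ℂ))⁻¹ • ∑ c : Q, κ c • T (Quotient.out c) with he
  have hcardne : ((Fintype.card Q : ℂ)) ≠ 0 := by
    exact_mod_cast Nat.cast_ne_zero.mpr Fintype.card_ne_zero
  have hev : ∀ v : V, e v = ((Fintype.card Q : ℂ))⁻¹ •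
      ∑ c : Q, κ c • T (Quotient.out c) v := by
    intro v
    rw [he]
    simp [LinearMap.sum_apply]
  -- key scalar computation
  have key1 : ∀ (m : ↥(N ⊓ H)) (c : Q) (v : V),
      κ c • T (m * Quotient.out c) v
        = (θt m : ℂ) • (κ (m • c) • T (Quotient.out (m • c)) v) := by
    intro m c v
    set n' : ↥(N ⊓ H) := Quotient.out (m • c) with hn'
    have hmem : n'⁻¹ * (m * Quotient.out c) ∈ S' := by
      rw [← QuotientGroup.eq]
      have h1 : (QuotientGroup.mk (m • Quotient.out c) : Q) = m • c :=
        MulAction.Quotient.mk_smul_out S' m c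
      rw [hn', QuotientGroup.out_eq']
      exact h1.symm
    set sq : ↥S' := ⟨n'⁻¹ * (m * Quotient.out c), hmem⟩ with hsq
    have hdecomp : m * Quotient.out c = n' * (sq : ↥(N ⊓ H)) := by
      rw [hsq]; simp [mul_assoc]
    set sS : ↥S := ⟨((sq : ↥(N ⊓ H)) : G), Subgroup.mem_subgroupOf.mp sq.2⟩ with hsS
    have hTfact : T (m * Quotient.out c) = (θ sS : ℂ) • T n' := by
      rw [hdecomp, hTmul, hTS' sq]
      show T n' * ((θ sS : ℂ) • LinearMap.id) = (θ sS : ℂ) • T n'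
      ext w
      simp [Module.End.mul_apply]
    have hunit : (θt m : ℂ) * (θt (Quotient.out c) : ℂ) = (θt n' : ℂ) * (θ sS : ℂ) := by
      have h1 : θt (m * Quotient.out c) = θt n' * θt (sq : ↥(N ⊓ H)) := by
        rw [hdecomp, map_mul]
      rw [map_mul] at h1
      rw [hθtS' sq] at h1
      exact_mod_cast congrArg Units.val h1
    have hscal : κ c * (θ sS : ℂ) = (θt m : ℂ) * κ (m • c) := by
      rw [hκ]
      simp only
      rw [← hn']
      field_simp
      linear_combination -hunit
    rw [hTfact]
    simp only [LinearMap.smul_apply, smul_smul]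
    rw [hscal]
  -- T m ∘ e = θt m • e
  have L1pt : ∀ (m : ↥(N ⊓ H)) (v : V), T m (e v) = (θt m : ℂ) • e v := by
    intro m v
    rw [hev v, map_smul, map_sum]
    have hterm : ∀ c : Q, T m (κ c • T (Quotient.out c) v)
        = (θt m : ℂ) • (κ (m • c) • T (Quotient.out (m • c)) v) := by
      intro c
      rw [map_smul]
      have h1 : T m (T (Quotient.out c) v) = T (m * Quotient.out c) v := by
        rw [hTmul]; rfl
      rw [h1, key1 m c v]
    rw [Finset.sum_congr rfl (fun c _ => hterm c)]
    rw [show (∑ c : Q, (θt m : ℂ) • (κ (m • c) • T (Quotient.out (m • c)) v))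
        = (θt m : ℂ) • ∑ c : Q, κ (m • c) • T (Quotient.out (m • c)) v from
      (Finset.smul_sum).symm]
    rw [show (∑ c : Q, κ (m • c) • T (Quotient.out (m • c)) v)
        = ∑ c : Q, κ c • T (Quotient.out c) v from
      Fintype.sum_equiv (MulAction.toPerm m)
        (fun c => κ (m • c) • T (Quotient.out (m • c)) v)
        (fun c => κ c • T (Quotient.out c) v) (fun c => rfl)]
    rw [smul_comm]
  -- fixed points of all T's under θt are fixed by e
  have hEfix : ∀ u : V, (∀ n : ↥(N ⊓ H), T n u = (θt n : ℂ) • u) → e u = u := by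
    intro u hu
    rw [hev u]
    have : ∀ c : Q, κ c • T (Quotient.out c) u = u := by
      intro c
      rw [hu, smul_smul, hκmul, one_smul]
    rw [Finset.sum_congr rfl (fun c _ => this c), Finset.sum_const, Finset.card_univ,
      ← Nat.cast_smul_eq_nsmul ℂ, smul_smul, inv_mul_cancel₀ hcardne, one_smul]
  have L2pt : ∀ v : V, e (e v) = e v := fun v => hEfix (e v) (fun n => L1pt n v)
  -- e is nonzero
  have hene : e ≠ 0 := by
    intro h0
    have hsum : (∑ c : Q, κ c • T (Quotient.out c)) = 0 := by
      have := congrArg (fun f => (Fintype.card Q : ℂ) • f) he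
      simp only [smul_smul, mul_inv_cancel₀ hcardne, one_smul] at this
      rw [← this, h0, smul_zero]
    have := linearIndependent_iff'.mp h1indep Finset.univ κ (by
      simpa [hTdef] using hsum) (QuotientGroup.mk 1) (Finset.mem_univ _)
    exact hκne _ this
  -- e commutes with ρ
  have hecomm : ∀ (g : ↥H) (v : V), e (ρ g v) = ρ g (e v) := by
    intro g v
    rw [hev, hev, map_smul, map_sum]
    congr 1
    refine Finset.sum_congr rfl (fun c _ => ?_)
    rw [map_smul, hTρ]
  -- every equivariant endomorphism composed with e is a multiple of e
  have hAe' : ∀ a : V →ₗ[ℂ] V, a ∈ Submodule.span ℂ (Set.range T) →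
      ∃ c : ℂ, a ∘ₗ e = c • e := by
    intro a hmem
    induction hmem using Submodule.span_induction with
    | mem x h =>
        obtain ⟨n, rfl⟩ := h
        exact ⟨(θt n : ℂ), by ext v; exact L1pt n v⟩
    | zero => exact ⟨0, by simp⟩
    | add x y hx hy ihx ihy =>
        obtain ⟨c₁, hc₁⟩ := ihx
        obtain ⟨c₂, hc₂⟩ := ihy
        exact ⟨c₁ + c₂, by rw [LinearMap.add_comp, hc₁, hc₂, add_smul]⟩
    | smul r x hx ihx =>
        obtain ⟨c₁, hc₁⟩ := ihx
        exact ⟨r * c₁, by rw [LinearMap.smul_comp, hc₁, smul_smul]⟩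
  have hAe : ∀ a : V →ₗ[ℂ] V, (∀ (g : ↥H) (v : V), a (ρ g v) = ρ g (a v)) →
      ∃ c : ℂ, a ∘ₗ e = c • e := by
    intro a ha
    have hmem : a ∈ equivariantMaps ρ ρ := ha
    rw [h1span] at hmem
    exact hAe' a hmem
  -- the submodule
  set Wp : Submodule ℂ V := LinearMap.range e with hWpdef
  have hWp : RepInvariant ρ Wp := by
    rintro g _ ⟨w, rfl⟩
    exact ⟨ρ g w, hecomm g w⟩
  have hIrr : RepIrreducible (subRep ρ Wp hWp) :=
    range_idem_irreducible ρ e hecomm L2pt hene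
      (maschke_rep ρ) hAe hWp
  have hWpfix : ∀ v ∈ Wp, e v = v := by
    rintro _ ⟨w, rfl⟩; exact L2pt w
  have hTWp : ∀ (n : ↥(N ⊓ H)), ∀ v ∈ Wp, T n v = (θt n : ℂ) • v := by
    intro n v hv
    rw [← hWpfix v hv, L1pt n v]
  have hσ' : ∀ (g : ↥H × ↥(N ⊓ H)) (v : V),
      (σ.comp (jHNH H hH N)) g v = ρ g.1 (T g.2 v) := by
    intro g v
    have : jHNH H hH N (g.1, g.2) = jH H hH N g.1 * xdiag H hH N g.2 := jHNH_eq H hH N g.1 g.2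
    rw [MonoidHom.comp_apply, show g = (g.1, g.2) from rfl, this, map_mul]
    rfl
  set ι : ↥Wp →ₗ[ℂ] V := Wp.subtype with hι
  have hsubco : ∀ (g : ↥H) (v : ↥Wp), ((subRep ρ Wp hWp g v : ↥Wp) : V) = ρ g (v : V) := by
    intro g v; rfl
  have hboxco : ∀ (A : Type) (_ : AddCommGroup A) (_ : Module ℂ A)
      (τ : Representation ℂ ↥H A) (g : ↥H × ↥(N ⊓ H)) (v : A),
      boxRep τ θt g v = (θt g.2 : ℂ) • τ g.1 v := by
    intro A _ _ τ g v; rfl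
  have hιmem : ι ∈ equivariantMaps (boxRep (subRep ρ Wp hWp) θt) (σ.comp (jHNH H hH N)) := by
    intro g v
    rw [hboxco, hσ']
    have h1 : T g.2 (ι v) = (θt g.2 : ℂ) • (ι v) := hTWp g.2 _ v.2
    rw [h1, map_smul, map_smul]
    rw [hι]
    rfl
  have hEq : equivariantMaps (boxRep (subRep ρ Wp hWp) θt) (σ.comp (jHNH H hH N))
      = Submodule.span ℂ {ι} := by
    refine le_antisymm ?_ ?_
    · intro f hf
      have hf' : ∀ (g : ↥H × ↥(N ⊓ H)) (v : ↥Wp),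
          f (boxRep (subRep ρ Wp hWp) θt g v) = (σ.comp (jHNH H hH N)) g (f v) := hf
      have hfH : ∀ (g : ↥H) (v : ↥Wp), f (subRep ρ Wp hWp g v) = ρ g (f v) := by
        intro g v
        have := hf' (g, 1) v
        rw [hboxco, hσ'] at this
        simpa [hT1] using this
      have hfN : ∀ (n : ↥(N ⊓ H)) (v : ↥Wp), T n (f v) = (θt n : ℂ) • f v := by
        intro n v
        have := hf' (1, n) v
        rw [hboxco, hσ'] at this
        simp only [map_one, Module.End.one_apply] at this
        rw [← this, map_smul]
      set F : V →ₗ[ℂ] V := f ∘ₗ (LinearMap.codRestrict Wp e (fun v => ⟨v, rfl⟩)) with hF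
      have hFv : ∀ v : V, F v = f ⟨e v, ⟨v, rfl⟩⟩ := fun v => rfl
      have hFe : ∀ (g : ↥H) (v : V), F (ρ g v) = ρ g (F v) := by
        intro g v
        rw [hFv, hFv]
        have h1 : (⟨e (ρ g v), ⟨ρ g v, rfl⟩⟩ : ↥Wp) = subRep ρ Wp hWp g ⟨e v, ⟨v, rfl⟩⟩ := by
          apply Subtype.ext
          rw [hsubco]
          exact hecomm g v
        rw [h1, hfH]
      obtain ⟨c, hc⟩ := hAe F hFe
      have hfc : ∀ x : ↥Wp, f x = c • (x : V) := by
        intro x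
        have hx : e (x : V) = (x : V) := hWpfix _ x.2
        have h1 := congrArg (fun φ : V →ₗ[ℂ] V => φ (x : V)) hc
        simp only [LinearMap.comp_apply, LinearMap.smul_apply] at h1
        rw [hx] at h1
        have h2 : F (x : V) = f x := by
          rw [hFv]
          congr 1
          exact Subtype.ext hx
        rw [← h2]
        exact h1
      refine Submodule.mem_span_singleton.mpr ⟨c, ?_⟩
      ext x
      rw [hfc x]
      rfl
    · rw [Submodule.span_le, Set.singleton_subset_iff]
      exact hιmem
  haveI hnt : Nontrivial ↥Wp := hIrr.1
  have hι0 : ι ≠ 0 := by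
    intro h0
    obtain ⟨x, hx⟩ := exists_ne (0 : ↥Wp)
    apply hx
    have : ι x = 0 := by rw [h0]; rfl
    exact Subtype.ext this
  refine ⟨Wp, hWp, hIrr, ?_, ?_⟩
  · show Module.finrank ℂ
      ↥(equivariantMaps (boxRep (subRep ρ Wp hWp) θt) (σ.comp (jHNH H hH N))) = 1
    rw [hEq]
    exact finrank_span_singleton hι0
  · intro Wq hWq hirrq hmq
    -- extract a nonzero equivariant map
    have hne' : equivariantMaps (boxRep (subRep ρ Wq hWq) θt) (σ.comp (jHNH H hH N)) ≠ ⊥ := by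
      intro hb
      apply hmq
      show Module.finrank ℂ
        ↥(equivariantMaps (boxRep (subRep ρ Wq hWq) θt) (σ.comp (jHNH H hH N))) = 0
      rw [hb]
      exact finrank_bot ℂ _
    obtain ⟨g, hgmem, hg0⟩ := Submodule.exists_mem_ne_zero_of_ne_bot hne'
    have hg' : ∀ (p : ↥H × ↥(N ⊓ H)) (v : ↥Wq),
        g (boxRep (subRep ρ Wq hWq) θt p v) = (σ.comp (jHNH H hH N)) p (g v) := hgmem
    have hsubcoq : ∀ (k : ↥H) (v : ↥Wq), ((subRep ρ Wq hWq k v : ↥Wq) : V) = ρ k (v : V) := by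
      intro k v; rfl
    have hgH : ∀ (k : ↥H) (v : ↥Wq), g (subRep ρ Wq hWq k v) = ρ k (g v) := by
      intro k v
      have := hg' (k, 1) v
      rw [hboxco, hσ'] at this
      simpa [hT1] using this
    have hgN : ∀ (n : ↥(N ⊓ H)) (v : ↥Wq), T n (g v) = (θt n : ℂ) • g v := by
      intro n v
      have := hg' (1, n) v
      rw [hboxco, hσ'] at this
      simp only [map_one, Module.End.one_apply] at this
      rw [← this, map_smul]
    have hgWp : ∀ v : ↥Wq, g v ∈ Wp := by
      intro v
      exact ⟨g v, hEfix (g v) (fun n => hgN n v)⟩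
    -- g is injective
    have hker : LinearMap.ker g = ⊥ := by
      rcases hirrq.2 (LinearMap.ker g) (by
        intro k v hv
        rw [LinearMap.mem_ker] at hv ⊢
        rw [hgH, hv, map_zero]) with h | h
      · exact h
      · exfalso
        apply hg0
        ext v
        have : v ∈ LinearMap.ker g := h ▸ Submodule.mem_top
        simpa using this
    -- g is surjective onto Wp
    have hsurj : ∀ x : ↥Wp, ∃ w : ↥Wq, g w = (x : V) := by
      have hp' : ((LinearMap.range g).comap Wp.subtype) = ⊤ := by
        rcases hIrr.2 ((LinearMap.range g).comap Wp.subtype) (by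
          intro k x hx
          rw [Submodule.mem_comap] at hx ⊢
          obtain ⟨w, hw⟩ := hx
          refine ⟨subRep ρ Wq hWq k w, ?_⟩
          rw [hgH]
          rw [hw]
          rfl) with h | h
        · exfalso
          obtain ⟨w, hw⟩ : ∃ w : ↥Wq, g w ≠ 0 := by
            by_contra hall
            push_neg at hall
            exact hg0 (by ext w; simpa using hall w)
          have hmem : (⟨g w, hgWp w⟩ : ↥Wp) ∈ (LinearMap.range g).comap Wp.subtype := by
            rw [Submodule.mem_comap]
            exact ⟨w, rfl⟩
          rw [h] at hmem
          rw [Submodule.mem_bot] at hmem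
          apply hw
          have := congrArg (fun y : ↥Wp => (y : V)) hmem
          simpa using this
        · exact h
      intro x
      have : x ∈ (LinearMap.range g).comap Wp.subtype := hp' ▸ Submodule.mem_top
      rw [Submodule.mem_comap] at this
      obtain ⟨w, hw⟩ := this
      exact ⟨w, hw⟩
    set g' : ↥Wq →ₗ[ℂ] ↥Wp := LinearMap.codRestrict Wp g hgWp with hg'def
    have hg'bij : Function.Bijective g' := by
      constructor
      · intro a b hab
        have : g a = g b := congrArg (fun y : ↥Wp => (y : V)) hab
        have h2 : a - b ∈ LinearMap.ker g := by
          rw [LinearMap.mem_ker, map_sub, this, sub_self]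
        rw [hker, Submodule.mem_bot, sub_eq_zero] at h2
        exact h2
      · intro x
        obtain ⟨w, hw⟩ := hsurj x
        exact ⟨w, Subtype.ext hw⟩
    set η : ↥Wq ≃ₗ[ℂ] ↥Wp := LinearEquiv.ofBijective g' hg'bij with hη
    have hηap : ∀ w : ↥Wq, (η w : V) = g w := fun w => rfl
    have hηequiv : ∀ (k : ↥H) (w : ↥Wq), η (subRep ρ Wq hWq k w) = subRep ρ Wp hWp k (η w) := by
      intro k w
      apply Subtype.ext
      rw [hηap, hgH]
      rfl
    refine ⟨η.symm, ?_⟩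
    intro k v
    apply η.injective
    rw [η.apply_symm_apply, hηequiv, η.apply_symm_apply]
end
end

section
/- Let 1 → A → E → Q → 1 be an extension of finite groups with A abelian, and let η be a character of A fixed by the conjugation action of E. Let Box be the pushout of η : A → ℂ* along A → E, i.e., Box = (ℂ* × E)/{(η(a)^{-1}, a) : a ∈ A}. Then there is a natural dimension-preserving bijection between the set Irr(E, η) of irreducible representations of E whose restriction to A is η-isotypic and the set Irr(Box, id) of irreducible representations of Box on which ℂ* acts by the identity character. -/
noncomputable section

variable {K : Type*} [Group K] {V : Type*} [AddCommGroup V] [Module ℂ V]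

section Box

variable (E : Type*) [Group E]

/-- The subgroup of `ℂˣ × E` generated by the elements `(η(a)⁻¹, a)`, `a ∈ A` (it is
already normal when `η` is `E`-invariant). -/
def boxKer (A : Subgroup E) (η : ↥A →* ℂˣ) : Subgroup (ℂˣ × E) :=
  Subgroup.normalClosure {x | ∃ a : ↥A, x = ((η a)⁻¹, (a : E))}

instance (A : Subgroup E) (η : ↥A →* ℂˣ) : (boxKer E A η).Normal :=
  Subgroup.normalClosure_normal

/-- The pushout `Box = (ℂˣ × E)/{(η(a)⁻¹, a) : a ∈ A}` of `η : A → ℂˣ` along `A → E`. -/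
def BoxGrp (A : Subgroup E) (η : ↥A →* ℂˣ) : Type _ :=
  (ℂˣ × E) ⧸ boxKer E A η

instance (A : Subgroup E) (η : ↥A →* ℂˣ) : Group (BoxGrp E A η) :=
  inferInstanceAs (Group ((ℂˣ × E) ⧸ boxKer E A η))

/-- The canonical homomorphism `E → Box`. -/
def boxJ (A : Subgroup E) (η : ↥A →* ℂˣ) : E →* BoxGrp E A η :=
  (QuotientGroup.mk' (boxKer E A η)).comp (MonoidHom.inr ℂˣ E)

/-- The canonical central homomorphism `ℂˣ → Box`. -/
def boxZ (A : Subgroup E) (η : ↥A →* ℂˣ) : ℂˣ →* BoxGrp E A η :=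
  (QuotientGroup.mk' (boxKer E A η)).comp (MonoidHom.inl ℂˣ E)

end Box

namespace Stmt13Aux

variable {E : Type*} [Group E] {A : Subgroup E} {η : ↥A →* ℂˣ}
variable {V : Type*} [AddCommGroup V] [Module ℂ V]

/-- The scalar homomorphism `ℂˣ → (End ℂ V)ˣ`. -/
def scalarHom : ℂˣ →* (Module.End ℂ V)ˣ :=
  Units.map (algebraMap ℂ (Module.End ℂ V)).toMonoidHom

@[simp] lemma scalarHom_val (z : ℂˣ) :
    ((scalarHom z : (Module.End ℂ V)ˣ) : Module.End ℂ V) = (z : ℂ) • LinearMap.id := rfl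

/-- The homomorphism `ℂˣ × E → (End ℂ V)ˣ`, `(z, e) ↦ z • ρ e`. -/
def phiU (ρ : Representation ℂ E V) : ℂˣ × E →* (Module.End ℂ V)ˣ :=
  MonoidHom.noncommCoprod scalarHom ρ.asGroupHom (fun z e => by
    apply Units.ext
    show ((scalarHom z : (Module.End ℂ V)ˣ) : Module.End ℂ V) * _
        = _ * ((scalarHom z : (Module.End ℂ V)ˣ) : Module.End ℂ V)
    rw [scalarHom_val]
    ext v
    simp)

@[simp] lemma phiU_val (ρ : Representation ℂ E V) (z : ℂˣ) (e : E) :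
    ((phiU ρ (z, e) : (Module.End ℂ V)ˣ) : Module.End ℂ V) = (z : ℂ) • ρ e := by
  show ((scalarHom z * ρ.asGroupHom e : (Module.End ℂ V)ˣ) : Module.End ℂ V) = _
  rw [Units.val_mul, scalarHom_val, ρ.asGroupHom_apply]
  ext v
  simp

/-- The lifted representation on `Box`. -/
def tildeRep (ρ : Representation ℂ E V)
    (hρ : ∀ a : ↥A, ρ (a : E) = (η a : ℂ) • LinearMap.id) :
    Representation ℂ (BoxGrp E A η) V :=
  (Units.coeHom (Module.End ℂ V)).comp <|
    QuotientGroup.lift (boxKer E A η) (phiU ρ) (by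
      intro x hx
      refine Subgroup.normalClosure_le_normal (N := (phiU ρ).ker) ?_ hx
      rintro y ⟨a, rfl⟩
      show phiU ρ ((η a)⁻¹, (a : E)) = 1
      apply Units.ext
      rw [Units.val_one, phiU_val, hρ a, smul_smul]
      simp
      rfl)

lemma tildeRep_mk (ρ : Representation ℂ E V)
    (hρ : ∀ a : ↥A, ρ (a : E) = (η a : ℂ) • LinearMap.id) (z : ℂˣ) (e : E) :
    tildeRep ρ hρ ((QuotientGroup.mk (z, e) : BoxGrp E A η)) = (z : ℂ) • ρ e := by
  show ((phiU ρ (z, e) : (Module.End ℂ V)ˣ) : Module.End ℂ V) = _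
  exact phiU_val ρ z e

lemma mk_eq_boxZ_mul_boxJ (z : ℂˣ) (e : E) :
    (QuotientGroup.mk (z, e) : BoxGrp E A η) = boxZ E A η z * boxJ E A η e := by
  show (QuotientGroup.mk (z, e) : BoxGrp E A η) = QuotientGroup.mk ((z, 1) * (1, e))
  congr 1
  simp

lemma invariant_iff (ρt : Representation ℂ (BoxGrp E A η) V)
    (hz : ∀ z : ℂˣ, ρt (boxZ E A η z) = (z : ℂ) • LinearMap.id)
    (p : Submodule ℂ V) :
    RepInvariant ρt p ↔ RepInvariant (ρt.comp (boxJ E A η)) p := by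
  constructor
  · intro h g v hv
    exact h (boxJ E A η g) v hv
  · intro h x v hv
    induction x using QuotientGroup.induction_on with
    | H x =>
      obtain ⟨z, e⟩ := x
      rw [mk_eq_boxZ_mul_boxJ, map_mul]
      show (ρt (boxZ E A η z)) (ρt (boxJ E A η e) v) ∈ p
      rw [hz z]
      exact p.smul_mem _ (h e v hv)

end Stmt13Aux

/-- let `E` be a finite group, `A ⊴ E` abelian, and `η` a character of `A`
fixed by the conjugation action of `E`.  Let `Box` be the pushout of `η : A → ℂˣ` along
`A → E`.  Then there is a natural dimension-preserving bijection between `Irr(E, η)`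
(irreducible representations of `E` whose restriction to `A` is `η`-isotypic) and
`Irr(Box, id)` (irreducible representations of `Box` on which `ℂˣ` acts by the identity
character), given by precomposition with `E → Box`.
(The bijection is realized on each fixed space `V`, whence dimensions are preserved.) -/
theorem stmt13 {E : Type*} [Group E] [Finite E]
    (A : Subgroup E) (hA : A.Normal) (habA : ∀ a b : ↥A, a * b = b * a)
    (η : ↥A →* ℂˣ)
    (hinv : ∀ (g : E) (a : ↥A), η ⟨g * (a : E) * g⁻¹, hA.conj_mem a.1 a.2 g⟩ = η a)
    (V : Type*) [AddCommGroup V] [Module ℂ V] [FiniteDimensional ℂ V] :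
    ∃ e : {ρt : Representation ℂ (BoxGrp E A η) V // RepIrreducible ρt ∧
            ∀ z : ℂˣ, ρt (boxZ E A η z) = (z : ℂ) • LinearMap.id}
        ≃ {ρ : Representation ℂ E V // RepIrreducible ρ ∧
            ∀ a : ↥A, ρ (a : E) = (η a : ℂ) • LinearMap.id},
      ∀ ρt, (e ρt).1 = ρt.1.comp (boxJ E A η) := by
  classical
  open Stmt13Aux in
  -- forward map: precomposition with boxJ
  have hJa : ∀ a : ↥A, boxJ E A η (a : E) = boxZ E A η (η a) := by
    intro a
    refine (QuotientGroup.eq (s := boxKer E A η)).mpr ?_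
    apply Subgroup.subset_normalClosure
    refine ⟨a⁻¹, ?_⟩
    simp [MonoidHom.inr, MonoidHom.inl, Prod.ext_iff]
  refine ⟨{
    toFun := fun ρt => ⟨ρt.1.comp (boxJ E A η), ?_, ?_⟩
    invFun := fun ρ => ⟨tildeRep ρ.1 ρ.2.2, ?_, ?_⟩
    left_inv := ?_
    right_inv := ?_ }, fun ρt => rfl⟩
  · obtain ⟨ρt, ⟨hnt, hirr⟩, hz⟩ := ρt
    exact ⟨hnt, fun p hp => hirr p (((invariant_iff ρt hz p).mpr hp))⟩
  · intro a
    show ρt.1 (boxJ E A η (a : E)) = _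
    rw [hJa a, ρt.2.2]
  · obtain ⟨ρ, ⟨hnt, hirr⟩, ha⟩ := ρ
    refine ⟨hnt, fun p hp => hirr p ?_⟩
    intro g v hv
    have := hp (boxJ E A η g) v hv
    rwa [show (tildeRep ρ ha) (boxJ E A η g) = ρ g from by
      rw [show boxJ E A η g = (QuotientGroup.mk ((1 : ℂˣ), g) : BoxGrp E A η) from rfl,
        tildeRep_mk]; simp] at this
  · intro z
    rw [show boxZ E A η z = (QuotientGroup.mk (z, (1 : E)) : BoxGrp E A η) from rfl,
      tildeRep_mk]
    simp
    rfl
  · rintro ⟨ρt, hirr, hz⟩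
    apply Subtype.ext
    apply MonoidHom.ext
    intro x
    induction x using QuotientGroup.induction_on with
    | H x =>
      obtain ⟨z, e⟩ := x
      have hcomp : ∀ a : ↥A, (ρt.comp (boxJ E A η)) (a : E) = (η a : ℂ) • LinearMap.id := by
        intro a
        show ρt (boxJ E A η (a : E)) = _
        rw [hJa a, hz]
      show tildeRep (ρt.comp (boxJ E A η)) hcomp _ = _
      rw [tildeRep_mk, mk_eq_boxZ_mul_boxJ, map_mul, hz z]
      show _ = ((z : ℂ) • LinearMap.id) * ρt (boxJ E A η e)
      ext v
      simp
  · rintro ⟨ρ, hirr, ha⟩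
    apply Subtype.ext
    apply MonoidHom.ext
    intro g
    show tildeRep ρ ha (boxJ E A η g) = ρ g
    rw [show boxJ E A η g = (QuotientGroup.mk ((1 : ℂˣ), g) : BoxGrp E A η) from rfl,
      tildeRep_mk]
    simp
end
end
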